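/- With v* the mutation-weighted reproductive value vector, for every strategy y ∈ {1,…,n}: (1/N)·Σ_{i=1}^N d/dδ|_{δ=0} P_{π_δ}[X_i = y] = E_{π°}[ Δ̂'_{v*,y}(X) ]. -/

import Mathlib

open Finset

namespace SCT

abbrev Event (N : ℕ) := Finset (Fin N) × (Fin N → Fin N)

/-- The extension `α̃` of the parentage map of a replacement event:
it equals `α` on `R` and the identity off `R`. -/
def extMap {N : ℕ} (E : Event N) : Fin N → Fin N :=
  fun i => if i ∈ E.1 then E.2 i else i

/-- Transition probabilities of the mutation–selection Markov chain on states
`Fin N → Fin n`, for a replacement rule `p` and mutation probability `u`. -/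
noncomputable def transMat (N n : ℕ) (p : Event N → ℝ) (u : ℝ)
    (x y : Fin N → Fin n) : ℝ :=
  ∑ E : Event N, p E *
    (∏ i ∈ E.1, ((1 - u) * (if y i = x (E.2 i) then (1:ℝ) else 0) + u / (n:ℝ))) *
    (∏ i ∈ E.1ᶜ, (if y i = x i then (1:ℝ) else 0))

def IsDist {α : Type*} [Fintype α] (q : α → ℝ) : Prop :=
  (∀ a, 0 ≤ q a) ∧ ∑ a, q a = 1

def IsStationary {N n : ℕ} (P : (Fin N → Fin n) → (Fin N → Fin n) → ℝ)
    (π : (Fin N → Fin n) → ℝ) : Prop :=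
  IsDist π ∧ ∀ y, ∑ x, π x * P x y = π y

/-- Fixation axiom: some site `i` can propagate its lineage through the whole
population via finitely many replacement events of positive probability. -/
def FixationAxiom {N : ℕ} (p : Event N → ℝ) : Prop :=
  ∃ (i : Fin N) (m : ℕ) (E : Fin m → Event N), 1 ≤ m ∧
    (∀ k, 0 < p (E k)) ∧ (∃ k, i ∈ (E k).1) ∧
    ∀ j, ((List.ofFn (fun k => extMap (E k))).foldr (· ∘ ·) id) j = i

/-- Pairwise identity-by-state probability under the distribution `π`. -/
noncomputable def phi2 {N n : ℕ} (π : (Fin N → Fin n) → ℝ) (i j : Fin N) : ℝ :=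
  ∑ x, π x * (if x i = x j then (1:ℝ) else 0)

/-- Triple identity-by-state probability under the distribution `π`. -/
noncomputable def phi3 {N n : ℕ} (π : (Fin N → Fin n) → ℝ) (i j k : Fin N) : ℝ :=
  ∑ x, π x * (if x i = x j ∧ x j = x k then (1:ℝ) else 0)

/-- The probability that `i` replaces `j`, for fecundity vector `F`, under the
replacement-rule family `p`. -/
noncomputable def eRep {N : ℕ} (p : (Fin N → ℝ) → Event N → ℝ) (F : Fin N → ℝ)
    (i j : Fin N) : ℝ :=
  ∑ E ∈ univ.filter (fun E : Event N => j ∈ E.1 ∧ E.2 j = i), p F E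

/-- `mCoef p k i j` is the marginal effect `m_k^{ij}` of `k`'s fecundity on the
probability that `i` replaces `j`, evaluated at the all-ones fecundity vector. -/
noncomputable def mCoef {N : ℕ} (p : (Fin N → ℝ) → Event N → ℝ) (k i j : Fin N) : ℝ :=
  fderiv ℝ (fun F => eRep p F i j) (fun _ => (1:ℝ)) (Pi.single k 1)

/-- Neutral replacement probability `e°_{ij}`. -/
noncomputable def e0 {N : ℕ} (p : (Fin N → ℝ) → Event N → ℝ) (i j : Fin N) : ℝ :=
  eRep p (fun _ => (1:ℝ)) i j

/-- Neutral death probability `d°_i`. -/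
noncomputable def d0 {N : ℕ} (p : (Fin N → ℝ) → Event N → ℝ) (i : Fin N) : ℝ :=
  ∑ j, e0 p j i

/-- Ancestral random-walk matrix `A_{ij} := e°_{ji} / d°_i`. -/
noncomputable def Amat {N : ℕ} (p : (Fin N → ℝ) → Event N → ℝ) :
    Matrix (Fin N) (Fin N) ℝ :=
  Matrix.of fun i j => e0 p j i / d0 p i

/-- Mutation-weighted quantity `μ_i := (1/N)·Σ_j u·(Ã⁻¹)_{ji}` with
`Ã := I − (1−u)A`. -/
noncomputable def muVec {N : ℕ} (p : (Fin N → ℝ) → Event N → ℝ) (u : ℝ) (i : Fin N) : ℝ :=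
  (1/(N:ℝ)) * ∑ j, u * ((1 - (1-u) • Amat p)⁻¹ j i)

/-- Mutation-weighted reproductive value `v*_i := μ_i / (u·d°_i)`. -/
noncomputable def vstar {N : ℕ} (p : (Fin N → ℝ) → Event N → ℝ) (u : ℝ) (i : Fin N) : ℝ :=
  muVec p u i / (u * d0 p i)

/-- Fecundity vector `F_i(x) = exp(δ·u_i(x))` for payoff functions `pay`. -/
noncomputable def fec {N n : ℕ} (pay : Fin N → (Fin N → Fin n) → ℝ) (δ : ℝ)
    (x : Fin N → Fin n) : Fin N → ℝ :=
  fun i => Real.exp (δ * pay i x)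

/-- Transition probabilities of the mutation–selection chain at selection
intensity `δ` for payoff functions `pay`. -/
noncomputable def PdelGen (N n : ℕ) (p : (Fin N → ℝ) → Event N → ℝ) (u : ℝ)
    (pay : Fin N → (Fin N → Fin n) → ℝ) (δ : ℝ)
    (x y : Fin N → Fin n) : ℝ :=
  transMat N n (p (fec pay δ x)) u x y

/-- The expected change `Δ̂_{v,y}(x)` in the `v`-weighted abundance of strategy
`y` from state `x`, at selection intensity `δ`. -/
noncomputable def Dhat (N n : ℕ) (p : (Fin N → ℝ) → Event N → ℝ) (u : ℝ)
    (pay : Fin N → (Fin N → Fin n) → ℝ) (v : Fin N → ℝ) (y : Fin n) (δ : ℝ)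
    (x : Fin N → Fin n) : ℝ :=
  (∑ i, (if x i = y then (1:ℝ) else 0) *
      ((∑ j, eRep p (fec pay δ x) i j * v j) - (∑ j, eRep p (fec pay δ x) j i * v i)))
    + (u/(n:ℝ)) * ∑ i, (∑ j, eRep p (fec pay δ x) i j * v j) *
        (1 - (n:ℝ) * (if x i = y then (1:ℝ) else 0))

/-- The derivative `Δ̂'_{v,y}(x)` of `Δ̂` in `δ` at `δ = 0`, for fixed state `x`. -/
noncomputable def Dhat' (N n : ℕ) (p : (Fin N → ℝ) → Event N → ℝ) (u : ℝ)
    (pay : Fin N → (Fin N → Fin n) → ℝ) (v : Fin N → ℝ) (y : Fin n)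
    (x : Fin N → Fin n) : ℝ :=
  deriv (fun δ => Dhat N n p u pay v y δ x) 0

section Aux

variable {N n : ℕ}

/-- Sum over next states of transition probability times an indicator of site `k`. -/
lemma sumTrans (hn : 0 < n) (q : Event N → ℝ) (u : ℝ) (x : Fin N → Fin n)
    (k : Fin N) (y : Fin n) :
    ∑ x' : Fin N → Fin n, transMat N n q u x x' * (if x' k = y then (1:ℝ) else 0)
      = ∑ E : Event N, q E *
          (if k ∈ E.1 then ((1-u) * (if x (E.2 k) = y then (1:ℝ) else 0) + u/(n:ℝ))
           else (if x k = y then (1:ℝ) else 0)) := by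
  have hn' : (n:ℝ) ≠ 0 := Nat.cast_ne_zero.mpr hn.ne'
  unfold transMat
  simp only [Finset.sum_mul]
  rw [Finset.sum_comm]
  refine Finset.sum_congr rfl fun E _ => ?_
  set h : Fin N → Fin n → ℝ := fun i z =>
    if i ∈ E.1 then ((1-u) * (if z = x (E.2 i) then (1:ℝ) else 0) + u/(n:ℝ))
    else (if z = x i then (1:ℝ) else 0) with hh
  set F : Fin N → Fin n → ℝ := fun i z =>
    h i z * (if i = k then (if z = y then (1:ℝ) else 0) else 1) with hF
  have step1 : ∀ x' : Fin N → Fin n,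
      q E * (∏ i ∈ E.1, ((1 - u) * (if x' i = x (E.2 i) then (1:ℝ) else 0) + u / (n:ℝ))) *
        (∏ i ∈ E.1ᶜ, (if x' i = x i then (1:ℝ) else 0)) * (if x' k = y then (1:ℝ) else 0)
      = q E * ∏ i, F i (x' i) := by
    intro x'
    have h1 : (∏ i ∈ E.1, ((1 - u) * (if x' i = x (E.2 i) then (1:ℝ) else 0) + u / (n:ℝ)))
        = ∏ i ∈ E.1, h i (x' i) :=
      Finset.prod_congr rfl fun i hi => by simp [hh, hi]
    have h2 : (∏ i ∈ E.1ᶜ, (if x' i = x i then (1:ℝ) else 0)) = ∏ i ∈ E.1ᶜ, h i (x' i) :=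
      Finset.prod_congr rfl fun i hi => by
        simp [hh, (Finset.mem_compl.mp hi)]
    have h3 : (∏ i, h i (x' i)) * (if x' k = y then (1:ℝ) else 0) = ∏ i, F i (x' i) := by
      have : (if x' k = y then (1:ℝ) else 0)
          = ∏ i, (if i = k then (if x' i = y then (1:ℝ) else 0) else 1) := by
        rw [Finset.prod_ite_eq' Finset.univ k (fun i => if x' i = y then (1:ℝ) else 0)]
        simp
      rw [this, ← Finset.prod_mul_distrib]
    have h4 : (∏ i ∈ E.1, h i (x' i)) * ∏ i ∈ E.1ᶜ, h i (x' i) = ∏ i, h i (x' i) :=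
      Finset.prod_mul_prod_compl E.1 _
    rw [h1, h2, mul_assoc, mul_assoc, ← mul_assoc (∏ i ∈ E.1, h i (x' i)), h4, h3]
  calc ∑ x' : Fin N → Fin n,
        q E * (∏ i ∈ E.1, ((1 - u) * (if x' i = x (E.2 i) then (1:ℝ) else 0) + u / (n:ℝ))) *
          (∏ i ∈ E.1ᶜ, (if x' i = x i then (1:ℝ) else 0)) * (if x' k = y then (1:ℝ) else 0)
      = ∑ x' : Fin N → Fin n, q E * ∏ i, F i (x' i) := by
        exact Finset.sum_congr rfl fun x' _ => step1 x'
    _ = q E * ∑ x' : Fin N → Fin n, ∏ i, F i (x' i) := by rw [Finset.mul_sum]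
    _ = q E * ∏ i, ∑ z : Fin n, F i z := by rw [Fintype.prod_sum F]
    _ = q E * F k y := by
        congr 1
        rw [Finset.prod_eq_single k]
        · have : ∑ z : Fin n, F k z = F k y := by
            have : ∀ z : Fin n, F k z = if z = y then h k z else 0 := by
              intro z; simp only [hF, if_pos rfl]
              by_cases hz : z = y <;> simp [hz]
            simp only [this]
            rw [Finset.sum_ite_eq' Finset.univ y (fun z => h k z)]
            simp [hF]
          rw [this]
        · intro i _ hik
          have : ∀ z : Fin n, F i z = h i z := by
            intro z; simp [hF, hik]
          simp only [this, hh]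
          by_cases hi : i ∈ E.1
          · simp only [if_pos hi]
            rw [Finset.sum_add_distrib, Finset.sum_const, ← Finset.mul_sum]
            rw [Finset.sum_ite_eq' Finset.univ (x (E.2 i)) (fun _ => (1:ℝ))]
            simp [Finset.card_univ, hn']
            field_simp
            ring
          · simp only [if_neg hi]
            rw [Finset.sum_ite_eq' Finset.univ (x i) (fun _ => (1:ℝ))]
            simp
        · intro hk; exact absurd (Finset.mem_univ k) hk
    _ = q E * (if k ∈ E.1 then ((1-u) * (if x (E.2 k) = y then (1:ℝ) else 0) + u/(n:ℝ))
           else (if x k = y then (1:ℝ) else 0)) := by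
        congr 1
        simp [hF, hh, eq_comm]

end Aux
section Aux2

variable {N n : ℕ}

/-- Decompose the one-step expectation into indicator plus replacement terms. -/
lemma expandBstep (q : Event N → ℝ) (u : ℝ) (x : Fin N → Fin n) (k : Fin N) (y : Fin n) :
    ∑ E : Event N, q E *
        (if k ∈ E.1 then ((1-u) * (if x (E.2 k) = y then (1:ℝ) else 0) + u/(n:ℝ))
         else (if x k = y then (1:ℝ) else 0))
    = (∑ E : Event N, q E) * (if x k = y then (1:ℝ) else 0)
      + ∑ j : Fin N, (∑ E ∈ Finset.univ.filter (fun E : Event N => k ∈ E.1 ∧ E.2 k = j), q E) *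
          ((1-u) * (if x j = y then (1:ℝ) else 0) + u/(n:ℝ) - (if x k = y then (1:ℝ) else 0)) := by
  set a : ℝ := if x k = y then (1:ℝ) else 0 with ha
  set B : Fin N → ℝ := fun j => (1-u) * (if x j = y then (1:ℝ) else 0) + u/(n:ℝ) with hB
  have step1 : ∀ E : Event N,
      q E * (if k ∈ E.1 then B (E.2 k) else a)
        = q E * a + (if k ∈ E.1 then q E * (B (E.2 k) - a) else 0) := by
    intro E; by_cases hE : k ∈ E.1 <;> simp [hE] <;> ring
  have step1' : ∀ E : Event N,
      q E * (if k ∈ E.1 then ((1-u) * (if x (E.2 k) = y then (1:ℝ) else 0) + u/(n:ℝ)) else a)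
        = q E * a + (if k ∈ E.1 then q E * (B (E.2 k) - a) else 0) := step1
  simp only [step1', Finset.sum_add_distrib, ← Finset.sum_mul]
  congr 1
  rw [← Finset.sum_filter]
  rw [← Finset.sum_fiberwise_of_maps_to (t := Finset.univ)
        (fun (E : Event N) _ => Finset.mem_univ (E.2 k))
        (fun E => q E * (B (E.2 k) - a))]
  refine Finset.sum_congr rfl fun j _ => ?_
  rw [Finset.sum_mul]
  rw [Finset.filter_filter]
  refine Finset.sum_congr rfl fun E hE => ?_
  rw [(Finset.mem_filter.mp hE).2.2]

end Aux2
section Aux3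

variable {N n : ℕ}

/-- `Δ̂` as a `v`-weighted sum of per-site expected changes. -/
lemma DhatEq (hn : 0 < n) (p : (Fin N → ℝ) → Event N → ℝ) (u : ℝ)
    (pay : Fin N → (Fin N → Fin n) → ℝ) (v : Fin N → ℝ) (y : Fin n) (δ : ℝ)
    (x : Fin N → Fin n) :
    Dhat N n p u pay v y δ x
      = ∑ k, v k * ∑ j, eRep p (fec pay δ x) j k *
          ((1-u) * (if x j = y then (1:ℝ) else 0) + u/(n:ℝ)
            - (if x k = y then (1:ℝ) else 0)) := by
  have hn' : (n:ℝ) ≠ 0 := Nat.cast_ne_zero.mpr hn.ne'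
  set e : Fin N → Fin N → ℝ := fun i j => eRep p (fec pay δ x) i j with he
  set a : Fin N → ℝ := fun i => if x i = y then (1:ℝ) else 0 with haa
  have hR : (∑ k, v k * ∑ j, e j k * ((1-u) * a j + u/(n:ℝ) - a k))
      = ∑ i, ∑ j, e i j * v j * ((1-u) * a i + u/(n:ℝ) - a j) := by
    simp only [Finset.mul_sum]
    rw [Finset.sum_comm]
    exact Finset.sum_congr rfl fun i _ => Finset.sum_congr rfl fun j _ => by ring
  rw [hR]
  unfold Dhat
  simp only [← he, ← haa]
  have h1 : (∑ i, a i * ((∑ j, e i j * v j) - (∑ j, e j i * v i)))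
      = (∑ i, ∑ j, a i * (e i j * v j)) - (∑ i, ∑ j, a j * (e i j * v j)) := by
    rw [← Finset.sum_sub_distrib]
    have : ∀ i, a i * ((∑ j, e i j * v j) - (∑ j, e j i * v i))
        = (∑ j, a i * (e i j * v j)) - (∑ j, a i * (e j i * v i)) := by
      intro i; rw [mul_sub, Finset.mul_sum, Finset.mul_sum]
    simp only [this]
    rw [Finset.sum_sub_distrib, Finset.sum_sub_distrib]
    congr 1
    rw [Finset.sum_comm]
  have h2 : ((u/(n:ℝ)) * ∑ i, (∑ j, e i j * v j) * (1 - (n:ℝ) * a i))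
      = ∑ i, ∑ j, (u/(n:ℝ)) * ((e i j * v j) * (1 - (n:ℝ) * a i)) := by
    rw [Finset.mul_sum]
    exact Finset.sum_congr rfl fun i _ => by rw [Finset.sum_mul, Finset.mul_sum]
  rw [h1, h2, sub_add_eq_add_sub, ← Finset.sum_add_distrib, ← Finset.sum_sub_distrib]
  refine Finset.sum_congr rfl fun i _ => ?_
  rw [← Finset.sum_add_distrib, ← Finset.sum_sub_distrib]
  refine Finset.sum_congr rfl fun j _ => ?_
  have hun : (u/(n:ℝ)) * (n:ℝ) = u := by field_simp
  linear_combination (-(e i j * v j * a i)) * hun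

end Aux3
section Aux4

variable {N n : ℕ}

/-- One-step expectation of the indicator of strategy `y` at site `k`. -/
lemma oneStep (hn : 0 < n) (p : (Fin N → ℝ) → Event N → ℝ) (u : ℝ)
    (pay : Fin N → (Fin N → Fin n) → ℝ) (δ : ℝ) (x : Fin N → Fin n)
    (hq : ∑ E : Event N, p (fec pay δ x) E = 1) (k : Fin N) (y : Fin n) :
    ∑ x' : Fin N → Fin n, PdelGen N n p u pay δ x x' * (if x' k = y then (1:ℝ) else 0)
      = (if x k = y then (1:ℝ) else 0)
        + ∑ j, eRep p (fec pay δ x) j k *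
            ((1-u) * (if x j = y then (1:ℝ) else 0) + u/(n:ℝ)
              - (if x k = y then (1:ℝ) else 0)) := by
  unfold PdelGen
  rw [sumTrans hn, expandBstep, hq, one_mul]
  rfl

/-- The expected change `Δ̂` has mean zero under a stationary distribution. -/
lemma statZero (hn : 0 < n) (p : (Fin N → ℝ) → Event N → ℝ) (u : ℝ)
    (pay : Fin N → (Fin N → Fin n) → ℝ) (δ : ℝ) (π : (Fin N → Fin n) → ℝ)
    (hπ : IsStationary (PdelGen N n p u pay δ) π)
    (hq : ∀ x : Fin N → Fin n, ∑ E : Event N, p (fec pay δ x) E = 1)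
    (v : Fin N → ℝ) (y : Fin n) :
    ∑ x, π x * Dhat N n p u pay v y δ x = 0 := by
  set h1 : (Fin N → Fin n) → ℝ := fun x => ∑ k, v k * (if x k = y then (1:ℝ) else 0) with hh1
  have key : ∀ x, Dhat N n p u pay v y δ x
      = (∑ x' : Fin N → Fin n, PdelGen N n p u pay δ x x' * h1 x') - h1 x := by
    intro x
    have swap : ∑ x' : Fin N → Fin n, PdelGen N n p u pay δ x x' * h1 x'
        = ∑ k, v k * ∑ x' : Fin N → Fin n,
            PdelGen N n p u pay δ x x' * (if x' k = y then (1:ℝ) else 0) := by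
      simp only [hh1, Finset.mul_sum]
      rw [Finset.sum_comm]
      refine Finset.sum_congr rfl fun k _ => Finset.sum_congr rfl fun x' _ => by ring
    rw [DhatEq hn, swap]
    simp only [oneStep hn p u pay δ x (hq x), hh1]
    rw [← Finset.sum_sub_distrib]
    refine Finset.sum_congr rfl fun k _ => by ring
  simp only [key, mul_sub, Finset.sum_sub_distrib]
  have : ∑ x, π x * ∑ x' : Fin N → Fin n, PdelGen N n p u pay δ x x' * h1 x'
      = ∑ x, π x * h1 x := by
    have : ∀ x, π x * ∑ x' : Fin N → Fin n, PdelGen N n p u pay δ x x' * h1 x'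
        = ∑ x' : Fin N → Fin n, (π x * PdelGen N n p u pay δ x x') * h1 x' := by
      intro x; rw [Finset.mul_sum]; exact Finset.sum_congr rfl fun x' _ => by ring
    simp only [this]
    rw [Finset.sum_comm]
    refine Finset.sum_congr rfl fun x' _ => ?_
    rw [← Finset.sum_mul, hπ.2 x']
  rw [this, sub_self]

end Aux4
section Aux5

variable {N : ℕ}

lemma rowsumA (p : (Fin N → ℝ) → Event N → ℝ) (hd : ∀ i, 0 < d0 p i) (i : Fin N) :
    ∑ j, Amat p i j = 1 := by
  unfold Amat
  simp only [Matrix.of_apply]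
  rw [← Finset.sum_div]
  exact div_self (hd i).ne'

lemma nonnegA (p : (Fin N → ℝ) → Event N → ℝ) (hp0 : ∀ E, 0 ≤ p (fun _ => (1:ℝ)) E)
    (hd : ∀ i, 0 < d0 p i) (i j : Fin N) : 0 ≤ Amat p i j := by
  unfold Amat
  simp only [Matrix.of_apply]
  apply div_nonneg _ (hd i).le
  exact Finset.sum_nonneg fun E _ => hp0 E

lemma detA (hN : 1 ≤ N) (p : (Fin N → ℝ) → Event N → ℝ)
    (hp0 : ∀ E, 0 ≤ p (fun _ => (1:ℝ)) E) (hd : ∀ i, 0 < d0 p i)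
    {u : ℝ} (hu0 : 0 < u) (hu1 : u ≤ 1) :
    IsUnit (1 - (1-u) • Amat p).det := by
  have : Nonempty (Fin N) := ⟨⟨0, hN⟩⟩
  rw [isUnit_iff_ne_zero]
  intro h0
  obtain ⟨v, hv, hmul⟩ := Matrix.exists_mulVec_eq_zero_iff.mpr h0
  have hi : ∀ i, v i = (1-u) * ∑ j, Amat p i j * v j := by
    intro i
    have expand : ((1 - (1-u) • Amat p).mulVec v) i
        = v i - (1-u) * ∑ j, Amat p i j * v j := by
      simp only [Matrix.mulVec, dotProduct, Matrix.sub_apply, Matrix.smul_apply,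
        Matrix.one_apply, smul_eq_mul, sub_mul, ite_mul, one_mul, zero_mul,
        Finset.sum_sub_distrib, Finset.sum_ite_eq, Finset.mem_univ, if_true, Finset.mul_sum]
      have hms : ∑ x : Fin N, u * Amat p i x * v x = ∑ x : Fin N, u * (Amat p i x * v x) :=
        Finset.sum_congr rfl fun k _ => mul_assoc u (Amat p i k) (v k)
      rw [hms]
    have h0' := congrFun hmul i
    rw [expand] at h0'
    have : v i - (1-u) * ∑ j, Amat p i j * v j = 0 := h0'
    linarith
  obtain ⟨i0, _, hmax⟩ := Finset.exists_max_image Finset.univ (fun i => |v i|)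
    ⟨⟨0, hN⟩, Finset.mem_univ _⟩
  have hM : 0 < |v i0| := by
    have : ∃ j, v j ≠ 0 := Function.ne_iff.mp hv
    obtain ⟨j, hj⟩ := this
    exact lt_of_lt_of_le (abs_pos.mpr hj) (hmax j (Finset.mem_univ j))
  have hle : |v i0| ≤ (1-u) * |v i0| := by
    calc |v i0| = |(1-u) * ∑ j, Amat p i0 j * v j| := by rw [← hi i0]
      _ = (1-u) * |∑ j, Amat p i0 j * v j| := by
          rw [abs_mul, abs_of_nonneg (by linarith : (0:ℝ) ≤ 1-u)]
      _ ≤ (1-u) * ∑ j, |Amat p i0 j * v j| := by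
          apply mul_le_mul_of_nonneg_left (Finset.abs_sum_le_sum_abs _ _) (by linarith)
      _ ≤ (1-u) * ∑ j, Amat p i0 j * |v i0| := by
          apply mul_le_mul_of_nonneg_left _ (by linarith)
          refine Finset.sum_le_sum fun j _ => ?_
          rw [abs_mul, abs_of_nonneg (nonnegA p hp0 hd i0 j)]
          exact mul_le_mul_of_nonneg_left (hmax j (Finset.mem_univ j)) (nonnegA p hp0 hd i0 j)
      _ = (1-u) * |v i0| := by rw [← Finset.sum_mul, rowsumA p hd i0, one_mul]
  nlinarith

/-- The `v*`-weighted balance identity: the key property of reproductive value. -/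
lemma cstar (hN : 1 ≤ N) (p : (Fin N → ℝ) → Event N → ℝ)
    (hp0 : ∀ E, 0 ≤ p (fun _ => (1:ℝ)) E) (hd : ∀ i, 0 < d0 p i)
    {u : ℝ} (hu0 : 0 < u) (hu1 : u ≤ 1) (j : Fin N) :
    (1-u) * (∑ k, e0 p j k * vstar p u k) - vstar p u j * d0 p j = -(1/(N:ℝ)) := by
  set M : Matrix (Fin N) (Fin N) ℝ := 1 - (1-u) • Amat p with hM
  set w : Fin N → ℝ := fun k => (1/(N:ℝ)) * ∑ l, M⁻¹ l k with hw
  have hvw : ∀ k, vstar p u k * d0 p k = w k := by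
    intro k
    unfold vstar muVec
    rw [div_mul_eq_mul_div, div_eq_iff (mul_pos hu0 (hd k)).ne']
    rw [← Finset.mul_sum, ← hM]
    ring
  have he0 : ∀ k, e0 p j k = Amat p k j * d0 p k := by
    intro k
    unfold Amat
    simp only [Matrix.of_apply]
    rw [div_mul_cancel₀ _ (hd k).ne']
  have hsum : ∀ k, e0 p j k * vstar p u k = Amat p k j * w k := by
    intro k
    rw [he0 k, ← hvw k]
    ring
  have key : ∑ k, M k j * w k = 1/(N:ℝ) := by
    have hMinv : M⁻¹ * M = 1 := Matrix.nonsing_inv_mul M (detA hN p hp0 hd hu0 hu1)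
    have : ∑ k, M k j * w k = (1/(N:ℝ)) * ∑ l, (M⁻¹ * M) l j := by
      simp only [hw, Matrix.mul_apply, Finset.mul_sum]
      rw [Finset.sum_comm]
      exact Finset.sum_congr rfl fun l _ => Finset.sum_congr rfl fun k _ => by ring
    rw [this, hMinv]
    have : ∑ l, (1 : Matrix (Fin N) (Fin N) ℝ) l j = 1 := by
      simp [Matrix.one_apply, Finset.sum_ite_eq, Finset.mem_univ]
    rw [this, mul_one]
  have expand : ∑ k, M k j * w k
      = w j - (1-u) * ∑ k, Amat p k j * w k := by
    have : ∀ k, M k j * w k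
        = (if k = j then (1:ℝ) else 0) * w k - (1-u) * (Amat p k j * w k) := by
      intro k
      simp only [hM, Matrix.sub_apply, Matrix.smul_apply, Matrix.one_apply, smul_eq_mul]
      ring
    simp only [this]
    rw [Finset.sum_sub_distrib, ← Finset.mul_sum]
    congr 1
    simp [Finset.sum_ite_eq, Finset.mem_univ]
  have hfin : (∑ k, e0 p j k * vstar p u k) = ∑ k, Amat p k j * w k :=
    Finset.sum_congr rfl fun k _ => hsum k
  rw [hfin, hvw j]
  have := key
  rw [expand] at this
  linarith

end Aux5
section Aux6

variable {N n : ℕ}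

/-- At `δ = 0` and `v = v*`, the expected change is an affine function of the
number of `y`-strategists. -/
lemma Dhat0 (hN : 1 ≤ N) (hn : 0 < n) (p : (Fin N → ℝ) → Event N → ℝ)
    (hp0 : ∀ E, 0 ≤ p (fun _ => (1:ℝ)) E) (hd : ∀ i, 0 < d0 p i)
    {u : ℝ} (hu0 : 0 < u) (hu1 : u ≤ 1)
    (pay : Fin N → (Fin N → Fin n) → ℝ) (y : Fin n) (x : Fin N → Fin n) :
    Dhat N n p u pay (vstar p u) y 0 x
      = -(1/(N:ℝ)) * (∑ j, if x j = y then (1:ℝ) else 0)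
        + (u/(n:ℝ)) * ∑ k, vstar p u k * d0 p k := by
  rw [DhatEq hn]
  have hfec : fec pay 0 x = fun _ => (1:ℝ) := funext fun i => by simp [fec]
  rw [hfec]
  have he : ∀ j k : Fin N, eRep p (fun _ => (1:ℝ)) j k = e0 p j k := fun _ _ => rfl
  simp only [he]
  set v : Fin N → ℝ := vstar p u with hv
  set a : Fin N → ℝ := fun i => if x i = y then (1:ℝ) else 0 with ha
  have hd0 : ∀ k, d0 p k = ∑ j, e0 p j k := fun _ => rfl
  calc ∑ k, v k * ∑ j, e0 p j k * ((1-u) * a j + u/(n:ℝ) - a k)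
      = ∑ k, ∑ j, ((1-u) * a j * e0 p j k * v k
          + (u/(n:ℝ)) * (e0 p j k * v k) - a k * v k * e0 p j k) := by
        refine Finset.sum_congr rfl fun k _ => ?_
        rw [Finset.mul_sum]
        exact Finset.sum_congr rfl fun j _ => by ring
    _ = (∑ k, ∑ j, (1-u) * a j * e0 p j k * v k)
          + (∑ k, ∑ j, (u/(n:ℝ)) * (e0 p j k * v k))
          - ∑ k, ∑ j, a k * v k * e0 p j k := by
        simp only [Finset.sum_add_distrib, Finset.sum_sub_distrib]
    _ = (∑ j, a j * ((1-u) * ∑ k, e0 p j k * v k))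
          + ((u/(n:ℝ)) * ∑ k, v k * d0 p k)
          - ∑ k, a k * (v k * d0 p k) := by
        congr 1
        · congr 1
          · rw [Finset.sum_comm]
            refine Finset.sum_congr rfl fun j _ => ?_
            rw [Finset.mul_sum, Finset.mul_sum]
            exact Finset.sum_congr rfl fun k _ => by ring
          · rw [Finset.mul_sum]
            refine Finset.sum_congr rfl fun k _ => ?_
            rw [hd0 k, Finset.mul_sum, Finset.mul_sum]
            exact Finset.sum_congr rfl fun j _ => by ring
        · refine Finset.sum_congr rfl fun k _ => ?_
          rw [hd0 k, Finset.mul_sum, Finset.mul_sum]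
          exact Finset.sum_congr rfl fun j _ => by ring
    _ = (∑ j, a j * ((1-u) * (∑ k, e0 p j k * v k) - v j * d0 p j))
          + (u/(n:ℝ)) * ∑ k, v k * d0 p k := by
        rw [sub_eq_iff_eq_add]
        rw [add_assoc, add_comm ((u/(n:ℝ)) * ∑ k, v k * d0 p k), ← add_assoc]
        congr 1
        rw [← Finset.sum_add_distrib]
        exact Finset.sum_congr rfl fun j _ => by ring
    _ = -(1/(N:ℝ)) * (∑ j, a j) + (u/(n:ℝ)) * ∑ k, v k * d0 p k := by
        congr 1
        rw [Finset.mul_sum]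
        refine Finset.sum_congr rfl fun j _ => ?_
        rw [hv, cstar hN p hp0 hd hu0 hu1 j]
        ring

end Aux6
section Aux7

variable {N n : ℕ}

lemma diff_fec (pay : Fin N → (Fin N → Fin n) → ℝ) (x : Fin N → Fin n) :
    DifferentiableAt ℝ (fun δ : ℝ => fec pay δ x) 0 := by
  rw [differentiableAt_pi]
  intro i
  simp only [fec]
  exact (differentiableAt_fun_id.mul (differentiableAt_const (pay i x))).exp

lemma fec_zero (pay : Fin N → (Fin N → Fin n) → ℝ) (x : Fin N → Fin n) :
    fec pay 0 x = fun _ => (1:ℝ) := funext fun i => by simp [fec]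

lemma diff_pE (p : (Fin N → ℝ) → Event N → ℝ)
    (hpdiff : ∀ (E : Event N) (F : Fin N → ℝ), (∀ i, 0 < F i) →
      DifferentiableAt ℝ (fun G => p G E) F)
    (pay : Fin N → (Fin N → Fin n) → ℝ) (x : Fin N → Fin n) (E : Event N) :
    DifferentiableAt ℝ (fun δ : ℝ => p (fec pay δ x) E) 0 := by
  have houter := hpdiff E (fun _ => (1:ℝ)) (fun _ => one_pos)
  rw [← fec_zero pay x] at houter
  exact houter.comp 0 (diff_fec pay x)

lemma diff_eRep (p : (Fin N → ℝ) → Event N → ℝ)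
    (hpdiff : ∀ (E : Event N) (F : Fin N → ℝ), (∀ i, 0 < F i) →
      DifferentiableAt ℝ (fun G => p G E) F)
    (pay : Fin N → (Fin N → Fin n) → ℝ) (x : Fin N → Fin n) (i j : Fin N) :
    DifferentiableAt ℝ (fun δ : ℝ => eRep p (fec pay δ x) i j) 0 := by
  unfold eRep
  exact DifferentiableAt.fun_sum fun E _ => diff_pE p hpdiff pay x E

lemma diff_Dhat (hn : 0 < n) (p : (Fin N → ℝ) → Event N → ℝ)
    (hpdiff : ∀ (E : Event N) (F : Fin N → ℝ), (∀ i, 0 < F i) →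
      DifferentiableAt ℝ (fun G => p G E) F) (u : ℝ)
    (pay : Fin N → (Fin N → Fin n) → ℝ) (v : Fin N → ℝ) (y : Fin n)
    (x : Fin N → Fin n) :
    DifferentiableAt ℝ (fun δ : ℝ => Dhat N n p u pay v y δ x) 0 := by
  have hrw : (fun δ : ℝ => Dhat N n p u pay v y δ x)
      = fun δ : ℝ => ∑ k, v k * ∑ j, eRep p (fec pay δ x) j k *
          ((1-u) * (if x j = y then (1:ℝ) else 0) + u/(n:ℝ)
            - (if x k = y then (1:ℝ) else 0)) :=
    funext fun δ => DhatEq hn p u pay v y δ x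
  rw [hrw]
  refine DifferentiableAt.fun_sum fun k _ => DifferentiableAt.const_mul ?_ _
  exact DifferentiableAt.fun_sum fun j _ =>
    (diff_eRep p hpdiff pay x j k).mul_const _

lemma cont_PdelGen (p : (Fin N → ℝ) → Event N → ℝ)
    (hpdiff : ∀ (E : Event N) (F : Fin N → ℝ), (∀ i, 0 < F i) →
      DifferentiableAt ℝ (fun G => p G E) F) (u : ℝ)
    (pay : Fin N → (Fin N → Fin n) → ℝ) (x x' : Fin N → Fin n) :
    ContinuousAt (fun δ : ℝ => PdelGen N n p u pay δ x x') 0 := by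
  unfold PdelGen transMat
  exact tendsto_finset_sum _ fun E _ =>
    (((diff_pE p hpdiff pay x E).continuousAt.mul continuousAt_const).mul
      continuousAt_const)

/-- Slope of a differentiable function converges from the right. -/
lemma slope_right (f : ℝ → ℝ) (hf : DifferentiableAt ℝ f 0) :
    Filter.Tendsto (fun δ => (f δ - f 0)/δ) (nhdsWithin 0 (Set.Ioi 0)) (nhds (deriv f 0)) := by
  have h := hf.hasDerivAt
  rw [hasDerivAt_iff_tendsto_slope] at h
  have hmono : nhdsWithin (0:ℝ) (Set.Ioi 0) ≤ nhdsWithin (0:ℝ) {(0:ℝ)}ᶜ :=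
    nhdsWithin_mono _ (fun z hz => (ne_of_gt hz : z ≠ 0))
  refine (h.mono_left hmono).congr fun δ => ?_
  rw [slope_def_field, sub_zero]

end Aux7
/-- with `v*` the mutation-weighted reproductive value vector,
`(1/N)·Σ_i d/dδ|₀ P_{π_δ}[X_i = y] = E_{π°}[Δ̂'_{v*,y}]`. -/
theorem stmt12 (N n : ℕ) (hN : 1 ≤ N) (hn : 1 ≤ n)
    (p : (Fin N → ℝ) → Event N → ℝ)
    (hpdist : ∀ F : Fin N → ℝ, (∀ i, 0 < F i) → IsDist (p F))
    (hpdiff : ∀ (E : Event N) (F : Fin N → ℝ), (∀ i, 0 < F i) →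
      DifferentiableAt ℝ (fun G => p G E) F)
    (hfix : FixationAxiom (p (fun _ => (1:ℝ))))
    (u : ℝ) (hu0 : 0 < u) (hu1 : u ≤ 1)
    (hd : ∀ i, 0 < d0 p i)
    (pay : Fin N → (Fin N → Fin n) → ℝ)
    (π : ℝ → (Fin N → Fin n) → ℝ)
    (hstat : ∃ ε > (0:ℝ), ∀ δ : ℝ, 0 ≤ δ → δ < ε →
      IsStationary (PdelGen N n p u pay δ) (π δ) ∧
      ∀ π', IsStationary (PdelGen N n p u pay δ) π' → π' = π δ)
    (hdiff : ∀ (i : Fin N) (y : Fin n),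
      DifferentiableAt ℝ (fun δ => ∑ x, π δ x * (if x i = y then (1:ℝ) else 0)) 0)
    (y : Fin n) :
    (1/(N:ℝ)) * ∑ i, deriv (fun δ => ∑ x, π δ x * (if x i = y then (1:ℝ) else 0)) 0 =
      ∑ x, π 0 x * Dhat' N n p u pay (vstar p u) y x := by
  classical
  have hn0 : 0 < n := hn
  obtain ⟨ε, hε, hh⟩ := hstat
  have hfecpos : ∀ (δ : ℝ) (x : Fin N → Fin n), ∀ i, 0 < fec pay δ x i :=
    fun δ x i => Real.exp_pos _
  have hq : ∀ (δ : ℝ) (x : Fin N → Fin n), ∑ E : Event N, p (fec pay δ x) E = 1 :=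
    fun δ x => (hpdist _ (hfecpos δ x)).2
  have hp0 : ∀ E, 0 ≤ p (fun _ => (1:ℝ)) E := (hpdist _ (fun _ => one_pos)).1
  set v : Fin N → ℝ := vstar p u with hv
  set C : ℝ := (u/(n:ℝ)) * ∑ k, v k * d0 p k with hC
  set R : ℝ → ℝ := fun δ =>
    ∑ x, π δ x * (Dhat N n p u pay v y δ x - Dhat N n p u pay v y 0 x) with hRdef
  -- stationarity kills the mean of Δ̂
  have hzero : ∀ δ, 0 ≤ δ → δ < ε → ∑ x, π δ x * Dhat N n p u pay v y δ x = 0 :=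
    fun δ h1 h2 => statZero hn0 p u pay δ (π δ) ((hh δ h1 h2).1) (hq δ) v y
  have hD0 : ∀ x, Dhat N n p u pay v y 0 x
      = -(1/(N:ℝ)) * (∑ j, if x j = y then (1:ℝ) else 0) + C :=
    fun x => Dhat0 hN hn0 p hp0 hd hu0 hu1 pay y x
  -- R on [0, ε)
  have hRform : ∀ δ, 0 ≤ δ → δ < ε →
      R δ = (1/(N:ℝ)) * (∑ j, ∑ x, π δ x * (if x j = y then (1:ℝ) else 0)) - C := by
    intro δ h1 h2
    have hsum1 : ∑ x, π δ x = 1 := ((hh δ h1 h2).1).1.2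
    have hsplit : R δ = (∑ x, π δ x * Dhat N n p u pay v y δ x)
        - ∑ x, π δ x * Dhat N n p u pay v y 0 x := by
      simp only [hRdef, mul_sub, Finset.sum_sub_distrib]
    rw [hsplit, hzero δ h1 h2, zero_sub]
    have hx : ∑ x, π δ x * Dhat N n p u pay v y 0 x
        = ∑ x, (-(1/(N:ℝ)) * (π δ x * ∑ j, if x j = y then (1:ℝ) else 0) + C * π δ x) :=
      Finset.sum_congr rfl fun x _ => by rw [hD0 x]; ring
    rw [hx, Finset.sum_add_distrib, ← Finset.mul_sum, ← Finset.mul_sum, hsum1, mul_one]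
    have hswap : ∑ x, π δ x * ∑ j, (if x j = y then (1:ℝ) else 0)
        = ∑ j, ∑ x, π δ x * (if x j = y then (1:ℝ) else 0) := by
      rw [← Finset.sum_comm]
      exact Finset.sum_congr rfl fun x _ => Finset.mul_sum _ _ _
    rw [hswap]
    ring
  have hR0 : R 0 = 0 := by
    simp [hRdef]
  have hC0 : C = (1/(N:ℝ)) * ∑ j, ∑ x, π 0 x * (if x j = y then (1:ℝ) else 0) := by
    have h := hRform 0 le_rfl hε
    rw [hR0] at h
    linarith
  -- limit 1 : R δ / δ → LHS along the right-neighbourhood of 0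
  have hlim1 : Filter.Tendsto (fun δ => R δ / δ) (nhdsWithin 0 (Set.Ioi 0))
      (nhds ((1/(N:ℝ)) * ∑ i, deriv
        (fun δ => ∑ x, π δ x * (if x i = y then (1:ℝ) else 0)) 0)) := by
    have hmem : Set.Ioo (0:ℝ) ε ∈ nhdsWithin (0:ℝ) (Set.Ioi 0) :=
      Ioo_mem_nhdsGT_of_mem ⟨le_rfl, hε⟩
    have htend : Filter.Tendsto (fun δ => (1/(N:ℝ)) * ∑ j,
        ((∑ x, π δ x * (if x j = y then (1:ℝ) else 0))
          - (∑ x, π 0 x * (if x j = y then (1:ℝ) else 0))) / δ)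
        (nhdsWithin 0 (Set.Ioi 0))
        (nhds ((1/(N:ℝ)) * ∑ i, deriv
          (fun δ => ∑ x, π δ x * (if x i = y then (1:ℝ) else 0)) 0)) := by
      apply Filter.Tendsto.const_mul
      exact tendsto_finset_sum _ fun j _ => slope_right _ (hdiff j y)
    refine Filter.Tendsto.congr' ?_ htend
    refine Filter.eventuallyEq_of_mem hmem fun δ hδ => ?_
    have h1 := hRform δ (le_of_lt hδ.1) hδ.2
    rw [eq_comm]
    rw [h1, hC0, ← mul_sub, ← Finset.sum_sub_distrib, mul_div_assoc, Finset.sum_div]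
  -- the sequence δ_m = ε/(m+2)
  set dseq : ℕ → ℝ := fun m => ε / ((m:ℝ) + 2) with hdseq
  have hdIoo : ∀ m, dseq m ∈ Set.Ioo 0 ε := by
    intro m
    constructor
    · apply div_pos hε; positivity
    · apply div_lt_self hε
      have : (0:ℝ) ≤ (m:ℝ) := Nat.cast_nonneg m
      linarith
  have hdto : Filter.Tendsto dseq Filter.atTop (nhdsWithin 0 (Set.Ioi 0)) := by
    apply tendsto_nhdsWithin_of_tendsto_nhds_of_eventually_within
    · apply Filter.Tendsto.div_atTop tendsto_const_nhds
      exact Filter.tendsto_atTop_add_const_right _ 2 tendsto_natCast_atTop_atTop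
    · exact Filter.Eventually.of_forall fun m => (hdIoo m).1
  -- compactness: extract a convergent subsequence of the stationary distributions
  have hK : IsCompact (Set.pi Set.univ fun (_ : Fin N → Fin n) => Set.Icc (0:ℝ) 1) :=
    isCompact_univ_pi fun _ => isCompact_Icc
  have hmemK : ∀ m, π (dseq m) ∈ Set.pi Set.univ fun (_ : Fin N → Fin n) => Set.Icc (0:ℝ) 1 := by
    intro m
    have hdist := ((hh (dseq m) (hdIoo m).1.le (hdIoo m).2).1).1
    intro x _
    refine ⟨hdist.1 x, ?_⟩
    rw [← hdist.2]
    exact Finset.single_le_sum (fun i _ => hdist.1 i) (Finset.mem_univ x)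
  obtain ⟨b, hbK, φ, hφ, hconv⟩ := hK.tendsto_subseq hmemK
  have hconvx : ∀ x, Filter.Tendsto (fun m => π (dseq (φ m)) x) Filter.atTop (nhds (b x)) :=
    fun x => tendsto_pi_nhds.mp hconv x
  have hseqlim : Filter.Tendsto (fun m => dseq (φ m)) Filter.atTop
      (nhdsWithin 0 (Set.Ioi 0)) := hdto.comp hφ.tendsto_atTop
  have hseqlim0 : Filter.Tendsto (fun m => dseq (φ m)) Filter.atTop (nhds 0) :=
    hseqlim.mono_right nhdsWithin_le_nhds
  -- identify the limit b with π 0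
  have hb : b = π 0 := by
    have h0 := hh 0 le_rfl hε
    apply h0.2
    constructor
    · constructor
      · intro x
        exact ge_of_tendsto' (hconvx x) fun m =>
          ((hh (dseq (φ m)) (hdIoo (φ m)).1.le (hdIoo (φ m)).2).1).1.1 x
      · have hs := tendsto_finset_sum Finset.univ fun (x : Fin N → Fin n) _ => hconvx x
        have hone : Filter.Tendsto (fun m => ∑ x, π (dseq (φ m)) x)
            Filter.atTop (nhds 1) := by
          have : (fun m => ∑ x, π (dseq (φ m)) x) = fun _ => (1:ℝ) := by
            funext m
            exact ((hh (dseq (φ m)) (hdIoo (φ m)).1.le (hdIoo (φ m)).2).1).1.2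
          rw [this]; exact tendsto_const_nhds
        exact tendsto_nhds_unique hs hone
    · intro x'
      have hc : ∀ x, Filter.Tendsto (fun m => PdelGen N n p u pay (dseq (φ m)) x x')
          Filter.atTop (nhds (PdelGen N n p u pay 0 x x')) :=
        fun x => (cont_PdelGen p hpdiff u pay x x').tendsto.comp hseqlim0
      have hterm : Filter.Tendsto
          (fun m => ∑ x, π (dseq (φ m)) x * PdelGen N n p u pay (dseq (φ m)) x x')
          Filter.atTop (nhds (∑ x, b x * PdelGen N n p u pay 0 x x')) :=
        tendsto_finset_sum _ fun x _ => (hconvx x).mul (hc x)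
      have hterm' : Filter.Tendsto
          (fun m => ∑ x, π (dseq (φ m)) x * PdelGen N n p u pay (dseq (φ m)) x x')
          Filter.atTop (nhds (b x')) := by
        have heq : (fun m => ∑ x, π (dseq (φ m)) x * PdelGen N n p u pay (dseq (φ m)) x x')
            = fun m => π (dseq (φ m)) x' := by
          funext m
          exact ((hh (dseq (φ m)) (hdIoo (φ m)).1.le (hdIoo (φ m)).2).1).2 x'
        rw [heq]; exact hconvx x'
      exact tendsto_nhds_unique hterm hterm'
  -- limit 2 : along the subsequence, R δ / δ → E_{π₀}[Δ̂']
  have hslopeD : ∀ x, Filter.Tendsto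
      (fun δ => (Dhat N n p u pay v y δ x - Dhat N n p u pay v y 0 x) / δ)
      (nhdsWithin 0 (Set.Ioi 0)) (nhds (Dhat' N n p u pay v y x)) :=
    fun x => slope_right _ (diff_Dhat hn0 p hpdiff u pay v y x)
  have hlim2 : Filter.Tendsto (fun m => R (dseq (φ m)) / dseq (φ m)) Filter.atTop
      (nhds (∑ x, π 0 x * Dhat' N n p u pay v y x)) := by
    have hform : ∀ δ : ℝ, R δ / δ = ∑ x, π δ x *
        ((Dhat N n p u pay v y δ x - Dhat N n p u pay v y 0 x) / δ) := by
      intro δ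
      rw [hRdef]
      rw [Finset.sum_div]
      exact Finset.sum_congr rfl fun x _ => mul_div_assoc _ _ _
    have : (fun m => R (dseq (φ m)) / dseq (φ m)) = fun m => ∑ x, π (dseq (φ m)) x *
        ((Dhat N n p u pay v y (dseq (φ m)) x - Dhat N n p u pay v y 0 x) / dseq (φ m)) := by
      funext m; exact hform (dseq (φ m))
    rw [this]
    refine tendsto_finset_sum _ fun x _ => Filter.Tendsto.mul ?_ ?_
    · have := hconvx x
      rw [hb] at this
      exact this
    · exact (hslopeD x).comp hseqlim
  exact tendsto_nhds_unique (hlim1.comp hseqlim) hlim2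

end SCT
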